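/- Let (X,d) be a complete metric space, α : X × X → [0,∞) be N-transitive for some N ≥ 1, and T : X → X an α-contractive mapping of Meir–Keeler type that is α-admissible. If there exists x₀ ∈ X with α(x₀, Tx₀) ≥ 1 and (X,d) is (T,α)-regular, then T has a fixed point. -/

import Mathlib

open Filter

theorem stmt_5 {X : Type*} [MetricSpace X] [CompleteSpace X]
    (T : X → X) (α : X → X → ℝ) (N : ℕ) (hN : 1 ≤ N)
    (hα : ∀ x y, 0 ≤ α x y)
    (htrans : ∀ z : ℕ → X, (∀ i ≤ N, 1 ≤ α (z i) (z (i + 1))) → 1 ≤ α (z 0) (z (N + 1)))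
    (hMK : ∀ ε > (0:ℝ), ∃ δ > (0:ℝ), ∀ x y : X,
      ε ≤ dist x y → dist x y < ε + δ → α x y * dist (T x) (T y) < ε)
    (hadm : ∀ x y : X, 1 ≤ α x y → 1 ≤ α (T x) (T y))
    (hreg : ∀ (x0 x : X), (∀ n : ℕ, 1 ≤ α (T^[n] x0) (T^[n + 1] x0)) →
      Tendsto (fun n : ℕ => T^[n] x0) atTop (nhds x) →
      ∃ φ : ℕ → ℕ, StrictMono φ ∧ ∀ k : ℕ, 1 ≤ α (T^[φ k] x0) x)
    (x₀ : X) (hx₀ : 1 ≤ α x₀ (T x₀)) :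
    ∃ xs : X, T xs = xs := by
  classical
  set x : ℕ → X := fun n => T^[n] x₀ with hxdef
  have hxsucc : ∀ n, x (n + 1) = T (x n) := fun n => Function.iterate_succ_apply' T n x₀
  -- the orbital chain condition
  have hchain : ∀ n, 1 ≤ α (x n) (x (n + 1)) := by
    intro n
    induction n with
    | zero => simpa [x] using hx₀
    | succ n ih =>
      have h := hadm _ _ ih
      rw [← hxsucc n, ← hxsucc (n + 1)] at h
      exact h
  -- weak contraction when α ≥ 1
  have hwc : ∀ a b : X, 1 ≤ α a b → dist (T a) (T b) ≤ dist a b := by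
    intro a b hab
    rcases eq_or_lt_of_le (dist_nonneg : (0:ℝ) ≤ dist a b) with h | h
    · have hab' : a = b := dist_eq_zero.mp h.symm
      simp [hab']
    · obtain ⟨δ, hδ, hmk⟩ := hMK (dist a b) h
      have h2 := hmk a b le_rfl (by linarith)
      exact le_of_lt (lt_of_le_of_lt (le_mul_of_one_le_left dist_nonneg hab) h2)
  -- reformulated Meir-Keeler condition
  have hstep : ∀ ε > (0:ℝ), ∃ δ > (0:ℝ), δ ≤ ε ∧ ∀ a b : X, 1 ≤ α a b →
      dist a b < ε + δ → dist (T a) (T b) < ε := by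
    intro ε hε
    obtain ⟨δ, hδ, hmk⟩ := hMK ε hε
    refine ⟨min δ ε, lt_min hδ hε, min_le_right _ _, ?_⟩
    intro a b hab hlt
    rcases lt_or_ge (dist a b) ε with h | h
    · exact lt_of_le_of_lt (hwc a b hab) h
    · have h2 := hmk a b h (lt_of_lt_of_le hlt (by have := min_le_left δ ε; linarith))
      exact lt_of_le_of_lt (le_mul_of_one_le_left dist_nonneg hab) h2
  -- consecutive distances
  set D : ℕ → ℝ := fun n => dist (x n) (x (n + 1)) with hDdef
  have hDanti : Antitone D := by
    apply antitone_nat_of_succ_le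
    intro n
    have h := hwc (x n) (x (n + 1)) (hchain n)
    rw [← hxsucc (n + 1), ← hxsucc n] at h
    exact h
  have hDbdd : BddBelow (Set.range D) := ⟨0, by rintro y ⟨n, rfl⟩; exact dist_nonneg⟩
  have hDinf : Tendsto D atTop (nhds (⨅ n, D n)) := tendsto_atTop_ciInf hDanti hDbdd
  have hL0 : (⨅ n, D n) = 0 := by
    have hLnn : 0 ≤ ⨅ n, D n := le_ciInf fun n => dist_nonneg
    rcases eq_or_lt_of_le hLnn with h | h
    · exact h.symm
    · exfalso
      obtain ⟨δ, hδ, hδle, hkey⟩ := hstep _ h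
      have : ∃ n, D n < (⨅ n, D n) + δ := by
        by_contra hcon
        push_neg at hcon
        have := le_ciInf hcon
        linarith
      obtain ⟨n, hn⟩ := this
      have h2 := hkey (x n) (x (n + 1)) (hchain n) hn
      rw [← hxsucc (n + 1), ← hxsucc n] at h2
      have h3 : (⨅ n, D n) ≤ D (n + 1) := ciInf_le hDbdd (n + 1)
      exact absurd (lt_of_le_of_lt h3 h2) (lt_irrefl _)
  have hD0 : Tendsto D atTop (nhds 0) := hL0 ▸ hDinf
  -- α along gaps ≡ 1 mod N
  have hgap : ∀ n k, 1 ≤ α (x n) (x (n + 1 + k * N)) := by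
    intro n k
    induction k with
    | zero => simpa using hchain n
    | succ k ih =>
      set z : ℕ → X := fun i => if i = 0 then x n else x (n + k * N + i) with hz
      have h0 : z 0 = x n := by simp [z]
      have hNe : z (N + 1) = x (n + 1 + (k + 1) * N) := by
        have : n + k * N + (N + 1) = n + 1 + (k + 1) * N := by ring
        simp only [z, if_neg (Nat.succ_ne_zero N), this]
      have hcond : ∀ i ≤ N, 1 ≤ α (z i) (z (i + 1)) := by
        intro i hi
        rcases Nat.eq_zero_or_pos i with rfl | hpos
        · have h1 : z 1 = x (n + 1 + k * N) := by
            have : n + k * N + 1 = n + 1 + k * N := by ring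
            simp only [z, if_neg one_ne_zero, this]
          rw [h0, h1]
          exact ih
        · have h1 : z i = x (n + k * N + i) := by simp [z, hpos.ne']
          have h2 : z (i + 1) = x (n + k * N + i + 1) := by
            have : n + k * N + (i + 1) = n + k * N + i + 1 := by ring
            simp only [z, if_neg (Nat.succ_ne_zero i), this]
          rw [h1, h2]
          exact hchain _
      have h := htrans z hcond
      rw [h0, hNe] at h
      exact h
  -- the orbit is Cauchy
  have hcauchy : CauchySeq x := by
    rw [Metric.cauchySeq_iff']
    intro ε hε
    obtain ⟨δ, hδ, hδε, hkey⟩ := hstep (ε / 2) (by linarith)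
    have hNpos : (0:ℝ) < N := by exact_mod_cast hN
    have hc : (0:ℝ) < δ / (2 * N) := by positivity
    obtain ⟨n₀, hn₀⟩ := (Metric.tendsto_atTop.mp hD0) (δ / (2 * N)) hc
    have hDsmall : ∀ m, n₀ ≤ m → D m ≤ δ / (2 * N) := by
      intro m hm
      have := hn₀ m hm
      rw [Real.dist_eq, sub_zero, abs_of_nonneg dist_nonneg] at this
      exact this.le
    -- telescoping bound
    have htel : ∀ a, n₀ ≤ a → ∀ r : ℕ, dist (x a) (x (a + r)) ≤ r * (δ / (2 * N)) := by
      intro a ha r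
      induction r with
      | zero => simp
      | succ r ih =>
        calc dist (x a) (x (a + (r + 1)))
            ≤ dist (x a) (x (a + r)) + dist (x (a + r)) (x (a + r + 1)) := by
              have : a + (r + 1) = (a + r) + 1 := rfl
              rw [this]; exact dist_triangle _ _ _
          _ ≤ r * (δ / (2 * N)) + δ / (2 * N) := by
              have := hDsmall (a + r) (le_trans ha (Nat.le_add_right _ _))
              exact add_le_add ih this
          _ = (r + 1) * (δ / (2 * N)) := by ring
          _ = ((r : ℕ) + 1 : ℕ) * (δ / (2 * N)) := by push_cast; ring
    have hhalf : δ / (2 * N) ≤ δ / 2 := by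
      have hN1 : (1:ℝ) ≤ N := by exact_mod_cast hN
      rw [div_le_div_iff₀ (by positivity) (by norm_num)]
      nlinarith [mul_nonneg hδ.le (sub_nonneg.mpr hN1)]
    -- main induction: gaps of the form 1 + k*N from n₀
    have hmain : ∀ k, dist (x n₀) (x (n₀ + 1 + k * N)) < ε / 2 + δ / 2 := by
      intro k
      induction k with
      | zero =>
        have : dist (x n₀) (x (n₀ + 1)) ≤ δ / (2 * N) := hDsmall n₀ le_rfl
        simpa using lt_of_le_of_lt (le_trans this hhalf) (by linarith)
      | succ k ih =>
        have hmid : dist (x (n₀ + 1)) (x (n₀ + 1 + k * N + 1)) < ε / 2 := by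
          have h := hkey (x n₀) (x (n₀ + 1 + k * N)) (hgap n₀ k) (by linarith)
          rw [← hxsucc n₀, ← hxsucc (n₀ + 1 + k * N)] at h
          exact h
        have hidx : n₀ + 1 + (k + 1) * N = (n₀ + 1 + k * N + 1) + (N - 1) := by
          rw [Nat.succ_mul]; omega
        have htail : dist (x (n₀ + 1 + k * N + 1)) (x (n₀ + 1 + (k + 1) * N))
            ≤ (N - 1 : ℕ) * (δ / (2 * N)) := by
          rw [hidx]
          exact htel _ (by omega) (N - 1)
        have hcast : ((N - 1 : ℕ) : ℝ) = (N : ℝ) - 1 := by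
          rw [Nat.cast_sub hN]; norm_num
        have htail' : dist (x (n₀ + 1 + k * N + 1)) (x (n₀ + 1 + (k + 1) * N))
            ≤ ((N : ℝ) - 1) * (δ / (2 * N)) := by rw [← hcast]; exact htail
        have hsum : δ / (2 * N) + ((N : ℝ) - 1) * (δ / (2 * N)) = δ / 2 := by
          field_simp
          ring
        calc dist (x n₀) (x (n₀ + 1 + (k + 1) * N))
            ≤ dist (x n₀) (x (n₀ + 1)) + dist (x (n₀ + 1)) (x (n₀ + 1 + k * N + 1))
              + dist (x (n₀ + 1 + k * N + 1)) (x (n₀ + 1 + (k + 1) * N)) :=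
              dist_triangle4 _ _ _ _
          _ < δ / (2 * N) + ε / 2 + ((N : ℝ) - 1) * (δ / (2 * N)) := by
              have h1 := hDsmall n₀ le_rfl
              have := lt_of_le_of_lt (le_refl (0:ℝ)) hc
              exact add_lt_add_of_lt_of_le (add_lt_add_of_le_of_lt h1 hmid) htail'
          _ = ε / 2 + δ / 2 := by linarith [hsum]
    refine ⟨n₀, fun n hn => ?_⟩
    rcases eq_or_lt_of_le hn with rfl | hlt
    · simpa using hε
    · obtain ⟨m, hm⟩ : ∃ m, n = n₀ + 1 + m := ⟨n - (n₀ + 1), by omega⟩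
      set q := m / N with hq
      set r := m % N with hr
      have hqr : q * N + r = m := by rw [hq, hr, mul_comm]; exact Nat.div_add_mod m N
      have hrN : r < N := Nat.mod_lt _ (by omega)
      have hn' : n = (n₀ + 1 + q * N) + r := by rw [hm, ← hqr]; ring
      have h1 : dist (x n₀) (x n) ≤ dist (x n₀) (x (n₀ + 1 + q * N))
          + dist (x (n₀ + 1 + q * N)) (x ((n₀ + 1 + q * N) + r)) := by
        rw [hn']; exact dist_triangle _ _ _
      have h2 := hmain q
      have h3 := htel (n₀ + 1 + q * N) (by omega) r
      have h4 : (r : ℝ) * (δ / (2 * N)) ≤ δ / 2 := by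
        have hrle : (r : ℝ) ≤ N := by exact_mod_cast hrN.le
        calc (r : ℝ) * (δ / (2 * N)) ≤ N * (δ / (2 * N)) :=
              mul_le_mul_of_nonneg_right hrle hc.le
          _ = δ / 2 := by field_simp
      rw [dist_comm]
      calc dist (x n₀) (x n) ≤ dist (x n₀) (x (n₀ + 1 + q * N))
            + dist (x (n₀ + 1 + q * N)) (x ((n₀ + 1 + q * N) + r)) := h1
        _ < (ε / 2 + δ / 2) + δ / 2 := by
            have := le_trans h3 h4
            exact add_lt_add_of_lt_of_le h2 this
        _ ≤ ε := by linarith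
  -- convergence and fixed point
  obtain ⟨xs, hxs⟩ := cauchySeq_tendsto_of_complete hcauchy
  obtain ⟨φ, hφmono, hφ⟩ := hreg x₀ xs hchain hxs
  have hφtop : Tendsto φ atTop atTop := hφmono.tendsto_atTop
  have hdx : Tendsto (fun n => dist (x n) xs) atTop (nhds 0) := by
    have := hxs.dist (tendsto_const_nhds (α := ℕ) (x := xs))
    simpa using this
  have hlim : Tendsto (fun k => dist xs (x (φ k + 1)) + dist (x (φ k)) xs) atTop (nhds 0) := by
    have h1 : Tendsto (fun k => φ k + 1) atTop atTop :=
      tendsto_atTop_mono (fun k => Nat.le_succ _) hφtop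
    have h2 : Tendsto (fun k => dist xs (x (φ k + 1))) atTop (nhds 0) := by
      have := hdx.comp h1
      simpa [Function.comp_def, dist_comm] using this
    have h3 : Tendsto (fun k => dist (x (φ k)) xs) atTop (nhds 0) := by
      have := hdx.comp hφtop
      simpa [Function.comp_def] using this
    simpa using h2.add h3
  have hkey : ∀ k, dist xs (T xs) ≤ dist xs (x (φ k + 1)) + dist (x (φ k)) xs := by
    intro k
    have h1 : dist (x (φ k + 1)) (T xs) ≤ dist (x (φ k)) xs := by
      rw [hxsucc (φ k)]
      exact hwc _ _ (hφ k)
    calc dist xs (T xs) ≤ dist xs (x (φ k + 1)) + dist (x (φ k + 1)) (T xs) :=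
          dist_triangle _ _ _
      _ ≤ dist xs (x (φ k + 1)) + dist (x (φ k)) xs := by linarith
  have hfinal : dist xs (T xs) ≤ 0 := ge_of_tendsto hlim (Eventually.of_forall hkey)
  exact ⟨xs, by rw [← dist_eq_zero, dist_comm]; exact le_antisymm hfinal dist_nonneg⟩
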